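/- There exists a universal constant C > 0 such that for every smooth function φ(t,x) on (0,∞)×ℝ² and every (t,x) with 1 ≤ t/2 ≤ r (where r = |x|, ω = x/r), one has |r^{1/2}∂φ(t,x) - ω̂ D₋(r^{1/2}φ(t,x))| ≤ C⟨t+|x|⟩^{-1/2}[φ(t,x)]₁, where ω̂ = (-1, ω₁, ω₂), ∂φ = (∂ₜφ, ∂₁φ, ∂₂φ), D₋ = (∂ᵣ - ∂ₜ)/2, and [φ]₁ = |φ|₁ + ⟨t-r⟩|∂φ|, with |φ|₁ the sum of |Γφ| over the six vector fields Γ ∈ {L₁, L₂, Ω, ∂₀, ∂₁, ∂₂} together with |φ|. -/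

import Mathlib

noncomputable section

def dT (φ : ℝ → ℝ → ℝ → ℝ) : ℝ → ℝ → ℝ → ℝ := fun t x1 x2 => deriv (fun s => φ s x1 x2) t
def d1 (φ : ℝ → ℝ → ℝ → ℝ) : ℝ → ℝ → ℝ → ℝ := fun t x1 x2 => deriv (fun s => φ t s x2) x1
def d2 (φ : ℝ → ℝ → ℝ → ℝ) : ℝ → ℝ → ℝ → ℝ := fun t x1 x2 => deriv (fun s => φ t x1 s) x2
def L1 (φ : ℝ → ℝ → ℝ → ℝ) : ℝ → ℝ → ℝ → ℝ := fun t x1 x2 => x1 * dT φ t x1 x2 + t * d1 φ t x1 x2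
def L2 (φ : ℝ → ℝ → ℝ → ℝ) : ℝ → ℝ → ℝ → ℝ := fun t x1 x2 => x2 * dT φ t x1 x2 + t * d2 φ t x1 x2
def Omg (φ : ℝ → ℝ → ℝ → ℝ) : ℝ → ℝ → ℝ → ℝ := fun t x1 x2 => x1 * d2 φ t x1 x2 - x2 * d1 φ t x1 x2
/-- r = |x| -/
def rr (x1 x2 : ℝ) : ℝ := Real.sqrt (x1 ^ 2 + x2 ^ 2)
/-- ⟨y⟩ = √(1+y²) -/
def jb (y : ℝ) : ℝ := Real.sqrt (1 + y ^ 2)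
/-- radial derivative ∂ᵣ -/
def dr (φ : ℝ → ℝ → ℝ → ℝ) : ℝ → ℝ → ℝ → ℝ := fun t x1 x2 =>
  (x1 / rr x1 x2) * d1 φ t x1 x2 + (x2 / rr x1 x2) * d2 φ t x1 x2
/-- D₋ = (∂ᵣ - ∂ₜ)/2 -/
def Dm (φ : ℝ → ℝ → ℝ → ℝ) : ℝ → ℝ → ℝ → ℝ := fun t x1 x2 =>
  (dr φ t x1 x2 - dT φ t x1 x2) / 2
/-- |∂φ| : Euclidean norm of (∂ₜφ, ∂₁φ, ∂₂φ) -/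
def gradNorm (φ : ℝ → ℝ → ℝ → ℝ) (t x1 x2 : ℝ) : ℝ :=
  Real.sqrt (dT φ t x1 x2 ^ 2 + d1 φ t x1 x2 ^ 2 + d2 φ t x1 x2 ^ 2)
/-- |φ|₁ : sum of |φ| and |Γφ| over the six vector fields -/
def norm1 (φ : ℝ → ℝ → ℝ → ℝ) (t x1 x2 : ℝ) : ℝ :=
  |φ t x1 x2| + |L1 φ t x1 x2| + |L2 φ t x1 x2| + |Omg φ t x1 x2|
    + |dT φ t x1 x2| + |d1 φ t x1 x2| + |d2 φ t x1 x2|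
/-- [φ]₁ = |φ|₁ + ⟨t-r⟩|∂φ| -/
def bracket1 (φ : ℝ → ℝ → ℝ → ℝ) (t x1 x2 : ℝ) : ℝ :=
  norm1 φ t x1 x2 + jb (t - rr x1 x2) * gradNorm φ t x1 x2
/-- r^{1/2}φ -/
def sw (φ : ℝ → ℝ → ℝ → ℝ) : ℝ → ℝ → ℝ → ℝ := fun t x1 x2 => Real.sqrt (rr x1 x2) * φ t x1 x2

set_option maxHeartbeats 2000000

/-- |r^{1/2}∂φ - ω̂D₋(r^{1/2}φ)| ≤ C⟨t+|x|⟩^{-1/2}[φ]₁ in the region 1 ≤ t/2 ≤ r. -/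
theorem profile_approximation :
    ∃ C > 0, ∀ φ : ℝ → ℝ → ℝ → ℝ,
      ContDiffOn ℝ (⊤ : ℕ∞) (fun p : ℝ × ℝ × ℝ => φ p.1 p.2.1 p.2.2) {p : ℝ × ℝ × ℝ | 0 < p.1} →
      ∀ t x1 x2 : ℝ, 1 ≤ t / 2 → t / 2 ≤ rr x1 x2 →
        Real.sqrt
          ((Real.sqrt (rr x1 x2) * dT φ t x1 x2 - (-1) * Dm (sw φ) t x1 x2) ^ 2
            + (Real.sqrt (rr x1 x2) * d1 φ t x1 x2 - (x1 / rr x1 x2) * Dm (sw φ) t x1 x2) ^ 2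
            + (Real.sqrt (rr x1 x2) * d2 φ t x1 x2 - (x2 / rr x1 x2) * Dm (sw φ) t x1 x2) ^ 2)
        ≤ C * jb (t + rr x1 x2) ^ (-(1 / 2 : ℝ)) * bracket1 φ t x1 x2 := by
  refine ⟨12, by norm_num, ?_⟩
  intro φ hφ t x1 x2 ht htr
  -- basic facts about r
  have ht2 : (2:ℝ) ≤ t := by linarith
  have hr1 : (1:ℝ) ≤ rr x1 x2 := le_trans ht htr
  have hr0 : (0:ℝ) < rr x1 x2 := by linarith
  have hrsq : rr x1 x2 ^ 2 = x1 ^ 2 + x2 ^ 2 := Real.sq_sqrt (by positivity)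
  set r := rr x1 x2 with hrdef
  set s := Real.sqrt r with hsdef
  have hs0 : 0 < s := Real.sqrt_pos.mpr hr0
  have hs2 : s ^ 2 = r := Real.sq_sqrt hr0.le
  -- differentiability of φ at the point
  set F : ℝ × ℝ × ℝ → ℝ := fun p => φ p.1 p.2.1 p.2.2 with hF
  have hopen : IsOpen {p : ℝ × ℝ × ℝ | 0 < p.1} := isOpen_lt continuous_const continuous_fst
  have hmem : (t, x1, x2) ∈ {p : ℝ × ℝ × ℝ | 0 < p.1} := by
    simp only [Set.mem_setOf_eq]; linarith
  have hdF : DifferentiableAt ℝ F (t, x1, x2) :=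
    (hφ.differentiableOn (by simp)).differentiableAt (hopen.mem_nhds hmem)
  set L := fderiv ℝ F (t, x1, x2) with hL
  have hfd : HasFDerivAt F L (t, x1, x2) := hdF.hasFDerivAt
  -- partial derivatives
  have hcT : HasDerivAt (fun y : ℝ => ((y, x1, x2) : ℝ × ℝ × ℝ)) (1, 0, 0) t :=
    (hasDerivAt_id t).prodMk ((hasDerivAt_const t x1).prodMk (hasDerivAt_const t x2))
  have hc1 : HasDerivAt (fun y : ℝ => ((t, y, x2) : ℝ × ℝ × ℝ)) (0, 1, 0) x1 :=
    (hasDerivAt_const x1 t).prodMk ((hasDerivAt_id x1).prodMk (hasDerivAt_const x1 x2))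
  have hc2 : HasDerivAt (fun y : ℝ => ((t, x1, y) : ℝ × ℝ × ℝ)) (0, 0, 1) x2 :=
    (hasDerivAt_const x2 t).prodMk ((hasDerivAt_const x2 x1).prodMk (hasDerivAt_id x2))
  have hT0 : HasDerivAt (fun y => φ y x1 x2) (L (1, 0, 0)) t := by
    have h := hfd.comp_hasDerivAt t hcT; exact h
  have h10 : HasDerivAt (fun y => φ t y x2) (L (0, 1, 0)) x1 := by
    have h := hfd.comp_hasDerivAt x1 hc1; exact h
  have h20 : HasDerivAt (fun y => φ t x1 y) (L (0, 0, 1)) x2 := by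
    have h := hfd.comp_hasDerivAt x2 hc2; exact h
  have hT : HasDerivAt (fun y => φ y x1 x2) (dT φ t x1 x2) t := hT0.differentiableAt.hasDerivAt
  have h1 : HasDerivAt (fun y => φ t y x2) (d1 φ t x1 x2) x1 := h10.differentiableAt.hasDerivAt
  have h2 : HasDerivAt (fun y => φ t x1 y) (d2 φ t x1 x2) x2 := h20.differentiableAt.hasDerivAt
  -- derivative of y ↦ y² + x2²  and the sqrt chain
  have hne : x1 ^ 2 + x2 ^ 2 ≠ 0 := by nlinarith
  have hrne : Real.sqrt (x1 ^ 2 + x2 ^ 2) ≠ 0 := by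
    rw [show Real.sqrt (x1 ^ 2 + x2 ^ 2) = r from rfl]; positivity
  have hu1 : HasDerivAt (fun y : ℝ => y ^ 2 + x2 ^ 2) (2 * x1) x1 := by
    simpa using (hasDerivAt_pow 2 x1).add_const (x2 ^ 2)
  have hu2 : HasDerivAt (fun y : ℝ => x1 ^ 2 + y ^ 2) (2 * x2) x2 := by
    simpa using (hasDerivAt_pow 2 x2).const_add (x1 ^ 2)
  have hs1' : HasDerivAt (fun y => Real.sqrt (rr y x2)) (x1 / r / (2 * s)) x1 := by
    have h := (hu1.sqrt hne).sqrt hrne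
    convert h using 1
    rfl
    rw [show Real.sqrt (x1 ^ 2 + x2 ^ 2) = r from rfl,
      show Real.sqrt r = s from rfl]
    field_simp
  have hs2' : HasDerivAt (fun y => Real.sqrt (rr x1 y)) (x2 / r / (2 * s)) x2 := by
    have h := (hu2.sqrt hne).sqrt hrne
    convert h using 1
    rfl
    rw [show Real.sqrt (x1 ^ 2 + x2 ^ 2) = r from rfl,
      show Real.sqrt r = s from rfl]
    field_simp
  -- derivatives of sw φ
  have hswT : HasDerivAt (fun y => sw φ y x1 x2) (s * dT φ t x1 x2) t := hT.const_mul s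
  have hsw1 : HasDerivAt (fun y => sw φ t y x2)
      (x1 / r / (2 * s) * φ t x1 x2 + s * d1 φ t x1 x2) x1 := by
    exact hs1'.mul h1
  have hsw2 : HasDerivAt (fun y => sw φ t x1 y)
      (x2 / r / (2 * s) * φ t x1 x2 + s * d2 φ t x1 x2) x2 := by
    exact hs2'.mul h2
  have edT : dT (sw φ) t x1 x2 = s * dT φ t x1 x2 := hswT.deriv
  have ed1 : d1 (sw φ) t x1 x2 = x1 / r / (2 * s) * φ t x1 x2 + s * d1 φ t x1 x2 := hsw1.deriv
  have ed2 : d2 (sw φ) t x1 x2 = x2 / r / (2 * s) * φ t x1 x2 + s * d2 φ t x1 x2 := hsw2.deriv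
  have eD : Dm (sw φ) t x1 x2
      = s * ((x1 / r * d1 φ t x1 x2 + x2 / r * d2 φ t x1 x2 - dT φ t x1 x2) / 2)
        + φ t x1 x2 / (4 * s) := by
    simp only [Dm, dr, ← hrdef, edT, ed1, ed2]
    have hsne : s ≠ 0 := ne_of_gt hs0
    have hrne' : r ≠ 0 := ne_of_gt hr0
    field_simp
    linear_combination (-4 * φ t x1 x2) * hrsq
  -- abbreviations
  set p := φ t x1 x2 with hp
  set a0 := dT φ t x1 x2 with ha0
  set a1 := d1 φ t x1 x2 with ha1
  set a2 := d2 φ t x1 x2 with ha2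
  set D := Dm (sw φ) t x1 x2 with hD
  set go := Omg φ t x1 x2 with hgo
  set g1 := L1 φ t x1 x2 with hg1
  set g2 := L2 φ t x1 x2 with hg2
  set G := gradNorm φ t x1 x2 with hG
  set J := jb (t - r) with hJ
  set B := bracket1 φ t x1 x2 with hB
  have hgo' : go = x1 * a2 - x2 * a1 := by
    rw [hgo]; unfold Omg; rw [← ha1, ← ha2]
  have hg1' : g1 = x1 * a0 + t * a1 := by
    rw [hg1]; unfold L1; rw [← ha0, ← ha1]
  have hg2' : g2 = x2 * a0 + t * a2 := by
    rw [hg2]; unfold L2; rw [← ha0, ← ha2]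
  have hBeq : B = |p| + |g1| + |g2| + |go| + |a0| + |a1| + |a2| + J * G := by
    rw [hB]; unfold bracket1 norm1
    rw [← hrdef, ← hp, ← hg1, ← hg2, ← hgo, ← ha0, ← ha1, ← ha2, ← hG, ← hJ]
  have hGeq : G = Real.sqrt (a0 ^ 2 + a1 ^ 2 + a2 ^ 2) := by
    rw [hG]; unfold gradNorm; rw [← ha0, ← ha1, ← ha2]
  have hJeq : J = Real.sqrt (1 + (t - r) ^ 2) := by rw [hJ]; unfold jb; rfl
  clear_value p a0 a1 a2 D go g1 g2 G J B
  clear hp ha0 ha1 ha2 hD hgo hg1 hg2 hG hJ hB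
  clear hT0 h10 h20 hT h1 h2 hs1' hs2' hswT hsw1 hsw2 hu1 hu2 hfd hdF hφ hmem hopen
  clear_value r s
  clear hrdef hsdef
  have hG0 : 0 ≤ G := by rw [hGeq]; positivity
  have hJ0 : 0 ≤ J := by rw [hJeq]; positivity
  have hGa1 : |a1| ≤ G := by
    rw [hGeq, ← Real.sqrt_sq_eq_abs]
    apply Real.sqrt_le_sqrt
    nlinarith [sq_nonneg a0, sq_nonneg a2]
  have hGa2 : |a2| ≤ G := by
    rw [hGeq, ← Real.sqrt_sq_eq_abs]
    apply Real.sqrt_le_sqrt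
    nlinarith [sq_nonneg a0, sq_nonneg a1]
  have hJtr : |t - r| ≤ J := by
    rw [hJeq, ← Real.sqrt_sq_eq_abs]
    apply Real.sqrt_le_sqrt
    nlinarith
  have hJG : 0 ≤ J * G := mul_nonneg hJ0 hG0
  have hnn := And.intro (abs_nonneg p) (And.intro (abs_nonneg g1) (And.intro (abs_nonneg g2)
    (And.intro (abs_nonneg go) (And.intro (abs_nonneg a0) (And.intro (abs_nonneg a1)
      (abs_nonneg a2))))))
  obtain ⟨n0, n1, n2, n3, n4, n5, n6⟩ := hnn
  have hpB : |p| ≤ B := by rw [hBeq]; linarith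
  have hgoB : |go| ≤ B := by rw [hBeq]; linarith
  have hBigB : |g1| + |g2| + J * G ≤ B := by rw [hBeq]; linarith
  have hB0 : 0 ≤ B := by rw [hBeq]; linarith
  -- |x1| ≤ r, |x2| ≤ r
  have hx1r : |x1 / r| ≤ 1 := by
    rw [abs_div, abs_of_pos hr0, div_le_one hr0]
    calc |x1| = Real.sqrt (x1 ^ 2) := (Real.sqrt_sq_eq_abs x1).symm
      _ ≤ Real.sqrt (r ^ 2) := Real.sqrt_le_sqrt (by nlinarith [sq_nonneg x2])
      _ = r := Real.sqrt_sq hr0.le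
  have hx2r : |x2 / r| ≤ 1 := by
    rw [abs_div, abs_of_pos hr0, div_le_one hr0]
    calc |x2| = Real.sqrt (x2 ^ 2) := (Real.sqrt_sq_eq_abs x2).symm
      _ ≤ Real.sqrt (r ^ 2) := Real.sqrt_le_sqrt (by nlinarith [sq_nonneg x1])
      _ = r := Real.sqrt_sq hr0.le
  -- the good derivative D₊
  obtain ⟨Dp, hDp⟩ : ∃ d : ℝ, d = (a0 + (x1 / r * a1 + x2 / r * a2)) / 2 := ⟨_, rfl⟩
  have hiden : 2 * (r * Dp) = (x1 / r) * g1 + (x2 / r) * g2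
      - (t - r) * ((x1 / r) * a1 + (x2 / r) * a2) := by
    rw [hDp, hg1', hg2']
    field_simp
    linear_combination a0 * hrsq
  have habs3 : |2 * (r * Dp)| ≤ 2 * B := by
    rw [hiden]
    have e1 : |(x1 / r) * g1| ≤ |g1| := by
      rw [abs_mul]; nlinarith only [hx1r, abs_nonneg g1, abs_nonneg (x1 / r)]
    have e2 : |(x2 / r) * g2| ≤ |g2| := by
      rw [abs_mul]; nlinarith only [hx2r, abs_nonneg g2, abs_nonneg (x2 / r)]
    have h4 : |(x1 / r) * a1 + (x2 / r) * a2| ≤ 2 * G := by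
      calc |(x1 / r) * a1 + (x2 / r) * a2| ≤ |(x1 / r) * a1| + |(x2 / r) * a2| := abs_add_le _ _
        _ ≤ |a1| + |a2| := by
            rw [abs_mul, abs_mul]
            nlinarith only [hx1r, hx2r, abs_nonneg a1, abs_nonneg a2, abs_nonneg (x1 / r), abs_nonneg (x2 / r)]
        _ ≤ 2 * G := by linarith only [hGa1, hGa2]
    have e3 : |(t - r) * ((x1 / r) * a1 + (x2 / r) * a2)| ≤ J * (2 * G) := by
      rw [abs_mul]
      exact mul_le_mul hJtr h4 (abs_nonneg _) hJ0
    have e4 : J * (2 * G) = 2 * (J * G) := by ring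
    have hJGB : J * G ≤ B := by rw [hBeq]; linarith only [n0, n1, n2, n3, n4, n5, n6]
    calc |(x1 / r) * g1 + (x2 / r) * g2 - (t - r) * ((x1 / r) * a1 + (x2 / r) * a2)|
        ≤ |(x1 / r) * g1 + (x2 / r) * g2|
          + |(t - r) * ((x1 / r) * a1 + (x2 / r) * a2)| := abs_sub _ _
      _ ≤ |(x1 / r) * g1| + |(x2 / r) * g2|
          + |(t - r) * ((x1 / r) * a1 + (x2 / r) * a2)| := by
            linarith only [abs_add_le ((x1 / r) * g1) ((x2 / r) * g2)]
      _ ≤ 2 * B := by linarith only [e1, e2, e3, e4, hJGB, hBigB]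
  have hDpB : |Dp| ≤ B / r := by
    rw [le_div_iff₀ hr0]
    rw [abs_mul, abs_mul, abs_of_nonneg (by norm_num : (0:ℝ) ≤ 2), abs_of_nonneg hr0.le] at habs3
    linarith only [habs3]
  -- component identities
  have het : s * a0 - (-1) * D = s * Dp + p / (4 * s) := by
    rw [eD, hDp]; field_simp; ring
  have he1 : s * a1 - (x1 / r) * D
      = s * ((x1 / r) * Dp - (x2 / r) * (go / r)) - (x1 / r) * (p / (4 * s)) := by
    rw [eD, hDp, hgo']; field_simp; linear_combination (8 * s ^ 2 * a1) * hrsq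
  have he2 : s * a2 - (x2 / r) * D
      = s * ((x2 / r) * Dp + (x1 / r) * (go / r)) - (x2 / r) * (p / (4 * s)) := by
    rw [eD, hDp, hgo']; field_simp; linear_combination (8 * s ^ 2 * a2) * hrsq
  -- component bounds
  have hbt : |s * a0 - (-1) * D| ≤ (5 / 4) * (B / s) := by
    rw [het]
    calc |s * Dp + p / (4 * s)| ≤ |s * Dp| + |p / (4 * s)| := abs_add_le _ _
      _ = s * |Dp| + |p| / (4 * s) := by
          rw [abs_mul, abs_div, abs_of_pos hs0, abs_of_pos (by positivity : (0:ℝ) < 4 * s)]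
      _ ≤ s * (B / r) + B / (4 * s) := by gcongr
      _ = (5 / 4) * (B / s) := by rw [← hs2]; field_simp; ring
  have hgor : |go / r| ≤ B / r := by
    rw [abs_div, abs_of_pos hr0]; gcongr
  have hb1 : |s * a1 - (x1 / r) * D| ≤ (9 / 4) * (B / s) := by
    rw [he1]
    have c1 : |(x1 / r) * Dp - (x2 / r) * (go / r)| ≤ B / r + B / r := by
      calc |(x1 / r) * Dp - (x2 / r) * (go / r)|
          ≤ |(x1 / r) * Dp| + |(x2 / r) * (go / r)| := abs_sub _ _
        _ ≤ |Dp| + |go / r| := by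
            rw [abs_mul, abs_mul]
            nlinarith only [hx1r, hx2r, abs_nonneg Dp, abs_nonneg (go / r), abs_nonneg (x1 / r), abs_nonneg (x2 / r)]
        _ ≤ B / r + B / r := by gcongr
    have c2 : |(x1 / r) * (p / (4 * s))| ≤ B / (4 * s) := by
      rw [abs_mul, show |p / (4 * s)| = |p| / (4 * s) by
        rw [abs_div, abs_of_pos (show (0:ℝ) < 4 * s by positivity)]]
      calc |x1 / r| * (|p| / (4 * s)) ≤ 1 * (B / (4 * s)) := by gcongr
        _ = B / (4 * s) := one_mul _
    calc |s * ((x1 / r) * Dp - (x2 / r) * (go / r)) - (x1 / r) * (p / (4 * s))|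
        ≤ |s * ((x1 / r) * Dp - (x2 / r) * (go / r))| + |(x1 / r) * (p / (4 * s))| := abs_sub _ _
      _ ≤ s * (B / r + B / r) + B / (4 * s) := by
          rw [abs_mul, abs_of_pos hs0]
          have h5 := mul_le_mul_of_nonneg_left c1 hs0.le
          linarith only [h5, c2]
      _ = (9 / 4) * (B / s) := by rw [← hs2]; field_simp; ring
  have hb2 : |s * a2 - (x2 / r) * D| ≤ (9 / 4) * (B / s) := by
    rw [he2]
    have c1 : |(x2 / r) * Dp + (x1 / r) * (go / r)| ≤ B / r + B / r := by
      calc |(x2 / r) * Dp + (x1 / r) * (go / r)|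
          ≤ |(x2 / r) * Dp| + |(x1 / r) * (go / r)| := abs_add_le _ _
        _ ≤ |Dp| + |go / r| := by
            rw [abs_mul, abs_mul]
            nlinarith only [hx1r, hx2r, abs_nonneg Dp, abs_nonneg (go / r), abs_nonneg (x1 / r), abs_nonneg (x2 / r)]
        _ ≤ B / r + B / r := by gcongr
    have c2 : |(x2 / r) * (p / (4 * s))| ≤ B / (4 * s) := by
      rw [abs_mul, show |p / (4 * s)| = |p| / (4 * s) by
        rw [abs_div, abs_of_pos (show (0:ℝ) < 4 * s by positivity)]]
      calc |x2 / r| * (|p| / (4 * s)) ≤ 1 * (B / (4 * s)) := by gcongr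
        _ = B / (4 * s) := one_mul _
    calc |s * ((x2 / r) * Dp + (x1 / r) * (go / r)) - (x2 / r) * (p / (4 * s))|
        ≤ |s * ((x2 / r) * Dp + (x1 / r) * (go / r))| + |(x2 / r) * (p / (4 * s))| := abs_sub _ _
      _ ≤ s * (B / r + B / r) + B / (4 * s) := by
          rw [abs_mul, abs_of_pos hs0]
          have h5 := mul_le_mul_of_nonneg_left c1 hs0.le
          linarith only [h5, c2]
      _ = (9 / 4) * (B / s) := by rw [← hs2]; field_simp; ring
  -- jacobian weight comparison
  have hw0 : (0:ℝ) < jb (t + r) := by unfold jb; positivity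
  have hsw' : Real.sqrt (jb (t + r)) ≤ 2 * s := by
    have hw4 : jb (t + r) ≤ 4 * r := by
      unfold jb
      rw [show (4 * r) = Real.sqrt ((4 * r) ^ 2) from (Real.sqrt_sq (by positivity)).symm]
      apply Real.sqrt_le_sqrt
      nlinarith only [htr, hr1, ht2]
    rw [show (2 * s) = Real.sqrt ((2 * s) ^ 2) from (Real.sqrt_sq (by positivity)).symm]
    apply Real.sqrt_le_sqrt
    linarith only [hw4, hs2]
  have hM : 1 / (2 * s) ≤ jb (t + r) ^ (-(1 / 2 : ℝ)) := by
    rw [Real.rpow_neg hw0.le, ← Real.sqrt_eq_rpow]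
    have h0 : 0 < Real.sqrt (jb (t + r)) := Real.sqrt_pos.mpr hw0
    rw [← one_div]
    exact one_div_le_one_div_of_le h0 hsw'
  -- assembling
  set E0 : ℝ := s * a0 - (-1) * D with hE0
  set E1 : ℝ := s * a1 - (x1 / r) * D with hE1
  set E2 : ℝ := s * a2 - (x2 / r) * D with hE2
  have hkey : Real.sqrt (E0 ^ 2 + E1 ^ 2 + E2 ^ 2) ≤ |E0| + |E1| + |E2| := by
    have h : E0 ^ 2 + E1 ^ 2 + E2 ^ 2 ≤ (|E0| + |E1| + |E2|) ^ 2 := by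
      nlinarith only [sq_abs E0, sq_abs E1, sq_abs E2, mul_nonneg (abs_nonneg E0) (abs_nonneg E1),
        mul_nonneg (abs_nonneg E0) (abs_nonneg E2), mul_nonneg (abs_nonneg E1) (abs_nonneg E2)]
    calc Real.sqrt (E0 ^ 2 + E1 ^ 2 + E2 ^ 2) ≤ Real.sqrt ((|E0| + |E1| + |E2|) ^ 2) :=
          Real.sqrt_le_sqrt h
      _ = |E0| + |E1| + |E2| := Real.sqrt_sq (by positivity)
  calc Real.sqrt (E0 ^ 2 + E1 ^ 2 + E2 ^ 2) ≤ |E0| + |E1| + |E2| := hkey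
    _ ≤ (23 / 4) * (B / s) := by rw [hE0, hE1, hE2]; linarith only [hbt, hb1, hb2]
    _ ≤ 12 * jb (t + r) ^ (-(1 / 2 : ℝ)) * B := by
        have hq : 12 * (1 / (2 * s)) * B = 6 * (B / s) := by field_simp; ring
        have h1 : (23 / 4) * (B / s) ≤ 6 * (B / s) := by
          linarith only [div_nonneg hB0 hs0.le]
        have h2 : 12 * (1 / (2 * s)) * B ≤ 12 * jb (t + r) ^ (-(1 / 2 : ℝ)) * B := by gcongr
        linarith only [hq, h1, h2]
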